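/- Let G be a quasi 3-regular, 3-edge-connected multigraph, let (v, w) be an edge of G with v or w equal to the high-degree vertex, and let u be a vertex distinct from v and w. Suppose G has at most one double edge and, if it has one, u is an endpoint of that double edge. Then G contains a chordless cycle that contains the edge (v, w) and does not contain the vertex u. -/

import Mathlib

/-! Basic theory of loopless undirected multigraphs. -/

/-- A loopless undirected multigraph on the vertex type `V`: a type of edges
together with a map assigning to each edge its unordered pair of (distinct)
endpoints.  All multigraphs are assumed to have finitely many edges. -/
structure Multigraph (V : Type) where
  Edge : Type
  ends : Edge → Sym2 V
  loopless : ∀ e, ¬ (ends e).IsDiag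
  edge_finite : Finite Edge

namespace Multigraph

open scoped Classical

variable {V : Type}

instance (G : Multigraph V) : Finite G.Edge := G.edge_finite

lemma exists_pair_eq {α : Type} (z : Sym2 α) : ∃ x y, z = s(x, y) := by
  induction z using Sym2.ind with
  | _ x y => exact ⟨x, y, rfl⟩

lemma map_not_isDiag {α β : Type} (f : α → β) (z : Sym2 α)
    (hf : ∀ x ∈ z, ∀ y ∈ z, f x = f y → x = y) (hz : ¬ z.IsDiag) :
    ¬ (z.map f).IsDiag := by
  obtain ⟨x, y, rfl⟩ := exists_pair_eq z
  rw [Sym2.map_pair_eq, Sym2.mk_isDiag_iff]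
  rw [Sym2.mk_isDiag_iff] at hz
  exact fun h => hz (hf x (by simp) y (by simp) h)

/-- Restrict an unordered pair, all of whose members satisfy `P`, to an
unordered pair of elements of the subtype `{x // P x}`. -/
noncomputable def sym2RestrictP {α : Type} (P : α → Prop) (z : Sym2 α) (h : ∀ x ∈ z, P x) :
    Sym2 {x : α // P x} :=
  z.map fun x =>
    if hx : P x then ⟨x, hx⟩
    else Classical.choice (by
      obtain ⟨a, b, rfl⟩ := exists_pair_eq z
      exact ⟨⟨a, h a (by simp)⟩⟩)

lemma sym2RestrictP_not_isDiag {α : Type} (P : α → Prop) (z : Sym2 α) (h : ∀ x ∈ z, P x)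
    (hz : ¬ z.IsDiag) : ¬ (sym2RestrictP P z h).IsDiag := by
  apply map_not_isDiag
  · intro a ha b hb hab
    rw [dif_pos (h a ha), dif_pos (h b hb)] at hab
    exact congrArg Subtype.val hab
  · exact hz

/-- Walks in a multigraph, recorded as alternating sequences of vertices and edges. -/
inductive Walk (G : Multigraph V) : V → V → Type
  | nil (v : V) : Walk G v v
  | cons {u v w : V} (e : G.Edge) (he : G.ends e = s(u, v)) (p : Walk G v w) : Walk G u w

namespace Walk

variable {G : Multigraph V}

/-- The list of edges used by a walk. -/
def edges : ∀ {u v : V}, G.Walk u v → List G.Edge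
  | _, _, nil _ => []
  | _, _, cons e _ p => e :: p.edges

/-- The list of vertices visited by a walk, in order. -/
def support : ∀ {u v : V}, G.Walk u v → List V
  | u, _, nil _ => [u]
  | u, _, cons _ _ p => u :: p.support

end Walk

/-- `G.HasEDP u v k` : there are (at least) `k` pairwise edge-disjoint paths
between `u` and `v` in `G` (formalized as `k` pairwise edge-disjoint trails,
which is equivalent). -/
def HasEDP (G : Multigraph V) (u v : V) (k : ℕ) : Prop :=
  ∃ P : Fin k → G.Walk u v,
    (∀ i, (P i).edges.Nodup) ∧
    ∀ i j, i ≠ j → ∀ e, e ∈ (P i).edges → e ∉ (P j).edges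

/-- `G` is `k`-edge-connected: between any two distinct vertices there are at
least `k` pairwise edge-disjoint paths. -/
def EdgeConnected (G : Multigraph V) (k : ℕ) : Prop :=
  Nontrivial V ∧ ∀ u v : V, u ≠ v → G.HasEDP u v k

/-- `G` is exactly `k`-edge-connected: between any two distinct vertices there
are exactly `k` pairwise edge-disjoint paths (at least `k`, and not `k + 1`). -/
def ExactlyEdgeConnected (G : Multigraph V) (k : ℕ) : Prop :=
  Nontrivial V ∧ ∀ u v : V, u ≠ v → G.HasEDP u v k ∧ ¬ G.HasEDP u v (k + 1)

/-- The degree of a vertex: the number of edges incident to it. -/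
noncomputable def degree (G : Multigraph V) (v : V) : ℕ :=
  {e : G.Edge | v ∈ G.ends e}.ncard

/-- Two vertices are adjacent if some edge joins them. -/
def Adj (G : Multigraph V) (u v : V) : Prop := ∃ e : G.Edge, G.ends e = s(u, v)

/-- `G` restricted to `S` is connected (witnessed by walks staying inside `S`). -/
def ConnectedOn (G : Multigraph V) (S : Set V) : Prop :=
  ∀ u ∈ S, ∀ v ∈ S, ∃ p : G.Walk u v, ∀ x ∈ p.support, x ∈ S

/-- A multigraph is connected if it is nonempty and any two vertices are
joined by a walk. -/
def Connected (G : Multigraph V) : Prop :=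
  Nonempty V ∧ ∀ u v : V, Nonempty (G.Walk u v)

/-- A multigraph is 2-vertex-connected (biconnected) if it is connected and
removing any single vertex leaves it connected. -/
def Biconnected (G : Multigraph V) : Prop :=
  G.Connected ∧ ∀ x : V, G.ConnectedOn {x}ᶜ

/-- A closed walk is a cycle if it repeats no edge, repeats no vertex except
the base point, and has length at least 2 (a double edge is a cycle of
length 2; loops are excluded since multigraphs are loopless). -/
def IsCycle {G : Multigraph V} {v : V} (p : G.Walk v v) : Prop :=
  p.edges.Nodup ∧ p.support.tail.Nodup ∧ 2 ≤ p.edges.length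

/-- A closed walk is chordless if no edge outside of it joins two of its
vertices (a parallel copy of one of its edges counts as a chord). -/
def IsChordless {G : Multigraph V} {v : V} (p : G.Walk v v) : Prop :=
  ∀ e : G.Edge, e ∉ p.edges → ∀ x y : V, G.ends e = s(x, y) →
    x ∈ p.support → y ∈ p.support → False

/-- `G.ReachAvoid S x y`: there is a walk from `x` to `y` avoiding the set `S`. -/
def ReachAvoid (G : Multigraph V) (S : Set V) (x y : V) : Prop :=
  ∃ p : G.Walk x y, ∀ z ∈ p.support, z ∉ S

/-- The vertex sets of the connected components of `G ∖ S`.  For a cycle (or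
any subgraph) `C`, the `C`-partition of the paper consists of `C` together
with these components; its size is the number of components. -/
def componentsAvoiding (G : Multigraph V) (S : Set V) : Set (Set V) :=
  {T | ∃ x, x ∉ S ∧ T = {y | G.ReachAvoid S x y}}

/-- Contract the (nonempty) vertex set `S` of `G` to a single new vertex
(`none`), deleting the edges inside `S`. -/
noncomputable def contractSet (G : Multigraph V) (S : Set V) :
    Multigraph (Option {x : V // x ∉ S}) where
  Edge := {e : G.Edge // ¬ ∀ x ∈ G.ends e, x ∈ S}
  ends e := (G.ends e.1).map fun x => if h : x ∈ S then none else some ⟨x, h⟩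
  loopless := by
    rintro ⟨e, he⟩ hd
    obtain ⟨x, y, hxy⟩ := exists_pair_eq (G.ends e)
    have hxyne : x ≠ y := by
      have h0 := G.loopless e
      rw [hxy, Sym2.mk_isDiag_iff] at h0
      exact h0
    have hor : x ∉ S ∨ y ∉ S := by
      by_contra hcon
      push_neg at hcon
      refine he fun z hz => ?_
      rw [hxy, Sym2.mem_iff] at hz
      rcases hz with rfl | rfl
      exacts [hcon.1, hcon.2]
    simp only [hxy, Sym2.map_pair_eq, Sym2.mk_isDiag_iff] at hd
    rcases hor with hx | hy
    · rw [dif_neg hx] at hd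
      by_cases hy : y ∈ S
      · rw [dif_pos hy] at hd; exact absurd hd (by simp)
      · rw [dif_neg hy] at hd
        exact hxyne (congrArg Subtype.val (Option.some_injective _ hd))
    · rw [dif_neg hy] at hd
      by_cases hx : x ∈ S
      · rw [dif_pos hx] at hd; exact absurd hd (by simp)
      · rw [dif_neg hx] at hd
        exact hxyne (congrArg Subtype.val (Option.some_injective _ hd))
  edge_finite := by
    have := G.edge_finite
    exact inferInstance

/-- The subgraph of `G` induced by the vertex set `S`. -/
noncomputable def induce (G : Multigraph V) (S : Set V) : Multigraph ↥S where
  Edge := {e : G.Edge // ∀ x ∈ G.ends e, x ∈ S}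
  ends e := sym2RestrictP (· ∈ S) (G.ends e.1) e.2
  loopless := fun e => sym2RestrictP_not_isDiag _ _ _ (G.loopless e.1)
  edge_finite := by
    have := G.edge_finite
    exact inferInstance

/-- Isomorphism of multigraphs. -/
structure Iso {V W : Type} (G : Multigraph V) (H : Multigraph W) where
  vmap : V ≃ W
  emap : G.Edge ≃ H.Edge
  ends_vmap : ∀ e : G.Edge, H.ends (emap e) = (G.ends e).map vmap

/-- `G` is quasi `k`-regular: at most one vertex has degree different from `k`. -/
def QuasiRegular (G : Multigraph V) (k : ℕ) : Prop :=
  {v : V | G.degree v ≠ k}.Subsingleton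

end Multigraph
namespace Multigraph

open scoped Classical

variable {V : Type}

/-- Block gluing: identify the vertex `u₁` of `G₁` with the vertex `u₂` of `G₂`
(the identified vertex is represented by `Sum.inl u₁`), keeping all edges. -/
noncomputable def blockGlue {V₁ V₂ : Type} (G₁ : Multigraph V₁) (G₂ : Multigraph V₂)
    (u₁ : V₁) (u₂ : V₂) : Multigraph (V₁ ⊕ {y : V₂ // y ≠ u₂}) where
  Edge := G₁.Edge ⊕ G₂.Edge
  ends e :=
    match e with
    | .inl e => (G₁.ends e).map Sum.inl
    | .inr e => (G₂.ends e).map fun y => if h : y = u₂ then Sum.inl u₁ else Sum.inr ⟨y, h⟩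
  loopless := by
    rintro (e | e) hd
    · exact map_not_isDiag _ _ (fun x _ y _ h => Sum.inl_injective h) (G₁.loopless e) hd
    · refine map_not_isDiag _ _ (fun x _ y _ h => ?_) (G₂.loopless e) hd
      by_cases hx : x = u₂ <;> by_cases hy : y = u₂
      · rw [hx, hy]
      · simp [hx, hy] at h
      · simp [hx, hy] at h
      · simp [hx, hy] at h
        exact h
  edge_finite := by
    have := G₁.edge_finite; have := G₂.edge_finite
    exact inferInstance

/-- `k`-bridge addition: add a new vertex (`none`) joined to the existing
vertex `v` by `k` parallel edges. -/
def bridgeAdd (G : Multigraph V) (v : V) (k : ℕ) : Multigraph (Option V) where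
  Edge := G.Edge ⊕ Fin k
  ends e :=
    match e with
    | .inl e => (G.ends e).map some
    | .inr _ => s(none, some v)
  loopless := by
    rintro (e | i) hd
    · exact map_not_isDiag _ _ (fun x _ y _ h => Option.some_injective _ h) (G.loopless e) hd
    · rw [Sym2.mk_isDiag_iff] at hd
      exact absurd hd (by simp)
  edge_finite := by
    have := G.edge_finite
    exact inferInstance

end Multigraph
namespace Multigraph

open scoped Classical

variable {V : Type}

lemma other_ne {G : Multigraph V} {u : V} {e : G.Edge} (h : u ∈ G.ends e) :
    Sym2.Mem.other h ≠ u := by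
  intro heq
  have hs := Sym2.other_spec h
  rw [heq] at hs
  have hl := G.loopless e
  rw [← hs, Sym2.mk_isDiag_iff] at hl
  exact hl rfl

/-- Vertex gluing: given vertices `u₁` of `G₁` and `u₂` of `G₂`, both of degree
`k` (witnessed by enumerations `ι₁`, `ι₂` of their incident edges), delete
`u₁` and `u₂` and join, for each `i`, the other endpoint of the `i`-th edge at
`u₁` to the other endpoint of the `i`-th edge at `u₂`. -/
noncomputable def vertexGlue {V₁ V₂ : Type} (G₁ : Multigraph V₁) (G₂ : Multigraph V₂)
    (u₁ : V₁) (u₂ : V₂) {k : ℕ}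
    (ι₁ : Fin k ≃ {e : G₁.Edge // u₁ ∈ G₁.ends e})
    (ι₂ : Fin k ≃ {e : G₂.Edge // u₂ ∈ G₂.ends e}) :
    Multigraph ({x : V₁ // x ≠ u₁} ⊕ {y : V₂ // y ≠ u₂}) where
  Edge := {e : G₁.Edge // u₁ ∉ G₁.ends e} ⊕ {e : G₂.Edge // u₂ ∉ G₂.ends e} ⊕ Fin k
  ends e :=
    match e with
    | .inl e =>
        (sym2RestrictP (· ≠ u₁) (G₁.ends e.1) fun x hx hxe => e.2 (hxe ▸ hx)).map Sum.inl
    | .inr (.inl e) =>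
        (sym2RestrictP (· ≠ u₂) (G₂.ends e.1) fun y hy hye => e.2 (hye ▸ hy)).map Sum.inr
    | .inr (.inr i) =>
        s(Sum.inl ⟨Sym2.Mem.other (ι₁ i).2, other_ne (ι₁ i).2⟩,
          Sum.inr ⟨Sym2.Mem.other (ι₂ i).2, other_ne (ι₂ i).2⟩)
  loopless := by
    rintro (e | e | i) hd
    · exact map_not_isDiag _ _ (fun x _ y _ h => Sum.inl_injective h)
        (sym2RestrictP_not_isDiag _ _ _ (G₁.loopless e.1)) hd
    · exact map_not_isDiag _ _ (fun x _ y _ h => Sum.inr_injective h)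
        (sym2RestrictP_not_isDiag _ _ _ (G₂.loopless e.1)) hd
    · rw [Sym2.mk_isDiag_iff] at hd
      exact absurd hd (by simp)
  edge_finite := by
    have := G₁.edge_finite; have := G₂.edge_finite
    exact inferInstance

/-- Cycle expansion: replace the vertex `u`, of degree `d` with incident edges
enumerated by `ι`, by a cycle on `d'` new vertices `u_0, …, u_{d'-1}`
(`2 ≤ d' ≤ d`); the `i`-th former edge at `u` is attached to `u_i` for
`i < d' - 1` and to `u_{d'-1}` for `i ≥ d' - 1`, so each of `u_0, …, u_{d'-2}`
receives exactly one of them and `u_{d'-1}` receives the rest. -/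
noncomputable def cycleExpand (G : Multigraph V) (u : V) {d d' : ℕ}
    (h2 : 2 ≤ d') (hdd : d' ≤ d)
    (ι : Fin d ≃ {e : G.Edge // u ∈ G.ends e}) :
    Multigraph ({x : V // x ≠ u} ⊕ Fin d') where
  Edge := {e : G.Edge // u ∉ G.ends e} ⊕ (Fin d ⊕ Fin d')
  ends e :=
    match e with
    | .inl e =>
        (sym2RestrictP (· ≠ u) (G.ends e.1) fun x hx hxe => e.2 (hxe ▸ hx)).map Sum.inl
    | .inr (.inl i) =>
        s(Sum.inr ⟨min i.1 (d' - 1), by omega⟩,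
          Sum.inl ⟨Sym2.Mem.other (ι i).2, other_ne (ι i).2⟩)
    | .inr (.inr j) =>
        s(Sum.inr j, Sum.inr ⟨(j.1 + 1) % d', Nat.mod_lt _ (by omega)⟩)
  loopless := by
    rintro (e | i | j) hd
    · exact map_not_isDiag _ _ (fun x _ y _ h => Sum.inl_injective h)
        (sym2RestrictP_not_isDiag _ _ _ (G.loopless e.1)) hd
    · rw [Sym2.mk_isDiag_iff] at hd
      exact absurd hd (by simp)
    · rw [Sym2.mk_isDiag_iff] at hd
      have hj : j.1 < d' := j.2
      have := congrArg Fin.val (Sum.inr_injective hd)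
      simp only at this
      rcases Nat.lt_or_ge (j.1 + 1) d' with h | h
      · rw [Nat.mod_eq_of_lt h] at this; omega
      · have hj1 : j.1 + 1 = d' := by omega
        rw [hj1, Nat.mod_self] at this; omega
  edge_finite := by
    have := G.edge_finite
    exact inferInstance

end Multigraph
namespace Multigraph

open scoped Classical

variable {V : Type}

/-- The edges of `G` crossing the vertex bipartition `⟨A, Aᶜ⟩`. -/
def cutEdges (G : Multigraph V) (A : Set V) : Set G.Edge :=
  {e | (∃ x ∈ G.ends e, x ∈ A) ∧ ∃ y ∈ G.ends e, y ∉ A}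

/-- The bipartition `⟨A, Aᶜ⟩` is a minimum edge cut of `G`: both sides are
nonempty and no other bipartition has fewer crossing edges. -/
def IsMinCut (G : Multigraph V) (A : Set V) : Prop :=
  A.Nonempty ∧ Aᶜ.Nonempty ∧
    ∀ B : Set V, B.Nonempty → Bᶜ.Nonempty →
      (G.cutEdges A).ncard ≤ (G.cutEdges B).ncard

/-- One side of a vertex splitting: keep the side `A` of the cut `⟨A, Aᶜ⟩`,
delete the other side, and reattach each cut edge to a single new vertex
(`none`). -/
noncomputable def splitSide (G : Multigraph V) (A : Set V) :
    Multigraph (Option {x : V // x ∈ A}) where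
  Edge := {e : G.Edge // ∀ x ∈ G.ends e, x ∈ A} ⊕ {e : G.Edge // e ∈ G.cutEdges A}
  ends e :=
    match e with
    | .inl e => (sym2RestrictP (· ∈ A) (G.ends e.1) e.2).map some
    | .inr e =>
        s(none, some ⟨Classical.choose e.2.1, (Classical.choose_spec e.2.1).2⟩)
  loopless := by
    rintro (e | e) hd
    · exact map_not_isDiag _ _ (fun x _ y _ h => Option.some_injective _ h)
        (sym2RestrictP_not_isDiag _ _ _ (G.loopless e.1)) hd
    · rw [Sym2.mk_isDiag_iff] at hd
      exact absurd hd (by simp)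
  edge_finite := by
    have := G.edge_finite
    exact inferInstance

/-- The dumbbell graph: two vertices joined by three parallel edges. -/
def dumbbell : Multigraph (Fin 2) where
  Edge := Fin 3
  ends _ := s(0, 1)
  loopless := fun _ h => absurd (Sym2.mk_isDiag_iff.mp h) (by decide)
  edge_finite := inferInstance

/-- `B` is (the vertex set of) a block of `G`: a maximal set of vertices
inducing a connected, 2-vertex-connected subgraph. -/
def IsBlock (G : Multigraph V) (B : Set V) : Prop :=
  (G.induce B).Biconnected ∧
    ∀ B' : Set V, B ⊆ B' → (G.induce B').Biconnected → B' = B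

/-- The set of double edges of `G`, as unordered pairs of distinct parallel
edges. -/
def doubleEdges (G : Multigraph V) : Set (Sym2 G.Edge) :=
  {z | ∃ e f : G.Edge, z = s(e, f) ∧ e ≠ f ∧ G.ends e = G.ends f}

/-- A collapsible cycle: a chordless, non-articulation cycle, all but at most
one of whose vertices have degree 3, whose contraction to a single vertex
yields an exactly 3-edge-connected multigraph. -/
def IsCollapsible {G : Multigraph V} {v : V} (p : G.Walk v v) : Prop :=
  IsCycle p ∧ IsChordless p ∧
    (G.componentsAvoiding {x | x ∈ p.support}).Subsingleton ∧
    {x : V | x ∈ p.support ∧ G.degree x ≠ 3}.Subsingleton ∧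
    (G.contractSet {x | x ∈ p.support}).ExactlyEdgeConnected 3

end Multigraph
namespace Multigraph

open scoped Classical

variable {V : Type}

/-- Smooth out the degree-two vertex `x` (whose two incident edges are
`e₁ = (x, a)` and `e₂ = (x, b)`): delete `x`, `e₁` and `e₂` and add a single
new edge joining `a` and `b`. -/
noncomputable def smoothAt {S : Set V} (H : Multigraph ↥S) (x a b : ↥S)
    (e₁ e₂ : H.Edge) (hne : e₁ ≠ e₂)
    (h₁ : H.ends e₁ = s(x, a)) (h₂ : H.ends e₂ = s(x, b))
    (hax : a ≠ x) (hbx : b ≠ x) (hab : a ≠ b)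
    (hdeg : ∀ e : H.Edge, x ∈ H.ends e → e = e₁ ∨ e = e₂) :
    Multigraph ↥(S \ {(x : V)}) where
  Edge := {e : H.Edge // e ≠ e₁ ∧ e ≠ e₂} ⊕ Unit
  ends e :=
    match e with
    | .inl e =>
        (sym2RestrictP (fun y : ↥S => y ≠ x) (H.ends e.1)
            (fun y hy hyx => by
              subst hyx
              rcases hdeg e.1 hy with h | h
              exacts [e.2.1 h, e.2.2 h])).map
          fun y => ⟨y.1.1, y.1.2, fun hh => y.2 (Subtype.ext hh)⟩
    | .inr _ =>
        s(⟨a.1, a.2, fun hh => hax (Subtype.ext hh)⟩,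
          ⟨b.1, b.2, fun hh => hbx (Subtype.ext hh)⟩)
  loopless := by
    rintro (e | e) hd
    · refine map_not_isDiag _ _ (fun y _ z _ h => ?_)
        (sym2RestrictP_not_isDiag _ _ _ (H.loopless e.1)) hd
      have hv := Subtype.ext_iff.mp h
      exact Subtype.ext (Subtype.ext hv)
    · rw [Sym2.mk_isDiag_iff] at hd
      have hv := Subtype.ext_iff.mp hd
      exact hab (Subtype.ext hv)
  edge_finite := by
    have := H.edge_finite
    exact inferInstance

/-- `SmoothSeq H K` : the multigraph `K` is obtained from `H` by a finite
sequence of smoothings of degree-two vertices. -/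
inductive SmoothSeq {V : Type} : ∀ {S T : Set V}, Multigraph ↥S → Multigraph ↥T → Prop
  | refl {S : Set V} (H : Multigraph ↥S) : SmoothSeq H H
  | step {S T : Set V} {H : Multigraph ↥S} {K : Multigraph ↥T}
      (x a b : ↥S) (e₁ e₂ : H.Edge) (hne : e₁ ≠ e₂)
      (h₁ : H.ends e₁ = s(x, a)) (h₂ : H.ends e₂ = s(x, b))
      (hax : a ≠ x) (hbx : b ≠ x) (hab : a ≠ b)
      (hdeg : ∀ e : H.Edge, x ∈ H.ends e → e = e₁ ∨ e = e₂) :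
      SmoothSeq (smoothAt H x a b e₁ e₂ hne h₁ h₂ hax hbx hab hdeg) K → SmoothSeq H K

/-- `G` is a 3-thick tree: it is obtained from a tree by replacing every tree
edge by three parallel edges. -/
def IsThreeThickTree (G : Multigraph V) : Prop :=
  ∃ T : SimpleGraph V, T.IsTree ∧
    ∃ f : G.Edge ≃ T.edgeSet × Fin 3, ∀ e : G.Edge, G.ends e = ((f e).1 : Sym2 V)

/-- The graphs obtainable from dumbbell graphs by cycle expansions and block
gluings (up to isomorphism). -/
inductive Synth3 : ∀ {V : Type}, Multigraph V → Prop
  | dumbbell : Synth3 dumbbell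
  | glue {V₁ V₂ : Type} {G₁ : Multigraph V₁} {G₂ : Multigraph V₂} (u₁ : V₁) (u₂ : V₂) :
      Synth3 G₁ → Synth3 G₂ → Synth3 (blockGlue G₁ G₂ u₁ u₂)
  | expand {V : Type} {G : Multigraph V} (u : V) {d d' : ℕ} (h2 : 2 ≤ d') (hdd : d' ≤ d)
      (ι : Fin d ≃ {e : G.Edge // u ∈ G.ends e}) :
      Synth3 G → Synth3 (G.cycleExpand u h2 hdd ι)
  | iso {V W : Type} {G : Multigraph V} {H : Multigraph W} :
      Synth3 G → Iso G H → Synth3 H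

/-- The graphs obtainable from 3-thick trees by block-respecting cycle
expansions (cycle expansions whose new cycle lies inside a single block of the
resulting graph), up to isomorphism. -/
inductive BRSynth : ∀ {V : Type}, Multigraph V → Prop
  | base {V : Type} {G : Multigraph V} : IsThreeThickTree G → BRSynth G
  | expand {V : Type} {G : Multigraph V} (u : V) {d d' : ℕ} (h2 : 2 ≤ d') (hdd : d' ≤ d)
      (ι : Fin d ≃ {e : G.Edge // u ∈ G.ends e})
      (hblock : ∃ B : Set ({x : V // x ≠ u} ⊕ Fin d'),
        (G.cycleExpand u h2 hdd ι).IsBlock B ∧ ∀ j : Fin d', Sum.inr j ∈ B) :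
      BRSynth G → BRSynth (G.cycleExpand u h2 hdd ι)
  | iso {V W : Type} {G : Multigraph V} {H : Multigraph W} :
      BRSynth G → Iso G H → BRSynth H

end Multigraph
namespace Multigraph

open scoped Classical

section Helpers

variable {V : Type} {G : Multigraph V}

namespace Walk

/-- Concatenation of walks. -/
def append : ∀ {a b c : V}, G.Walk a b → G.Walk b c → G.Walk a c
  | _, _, _, .nil _, q => q
  | _, _, _, .cons e he p, q => .cons e he (p.append q)

/-- Reversal of a walk. -/
def reverse : ∀ {a b : V}, G.Walk a b → G.Walk b a
  | _, _, .nil v => .nil v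
  | _, _, .cons e he p => p.reverse.append (.cons e (by rw [he, Sym2.eq_swap]) (.nil _))

lemma start_mem_support : ∀ {a b : V} (p : G.Walk a b), a ∈ p.support := by
  intro a b p
  cases p <;> simp [Walk.support]

lemma end_mem_support : ∀ {a b : V} (p : G.Walk a b), b ∈ p.support := by
  intro a b p
  induction p with
  | nil v => simp [Walk.support]
  | cons e he p ih => exact List.mem_cons_of_mem _ ih

lemma eq_of_edges_eq_nil : ∀ {a b : V} (p : G.Walk a b), p.edges = [] → a = b := by
  intro a b p
  cases p with
  | nil v => intro _; rfl
  | cons e he p => intro hh; simp [Walk.edges] at hh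

lemma mem_edges_append : ∀ {a b c : V} (p : G.Walk a b) (q : G.Walk b c) (f : G.Edge),
    f ∈ (p.append q).edges → f ∈ p.edges ∨ f ∈ q.edges := by
  intro a b c p
  induction p with
  | nil v => intro q f hf; exact Or.inr hf
  | cons e he p ih =>
      intro q f hf
      rcases List.mem_cons.mp hf with rfl | hf
      · exact Or.inl (List.mem_cons_self)
      · rcases ih q f hf with hf | hf
        exacts [Or.inl (List.mem_cons_of_mem _ hf), Or.inr hf]

lemma mem_support_append : ∀ {a b c : V} (p : G.Walk a b) (q : G.Walk b c) (x : V),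
    x ∈ (p.append q).support → x ∈ p.support ∨ x ∈ q.support := by
  intro a b c p
  induction p with
  | nil v => intro q x hx; exact Or.inr hx
  | cons e he p ih =>
      intro q x hx
      rcases List.mem_cons.mp hx with rfl | hx
      · exact Or.inl (List.mem_cons_self)
      · rcases ih q x hx with hx | hx
        exacts [Or.inl (List.mem_cons_of_mem _ hx), Or.inr hx]

lemma mem_edges_reverse : ∀ {a b : V} (p : G.Walk a b) (f : G.Edge),
    f ∈ p.reverse.edges → f ∈ p.edges := by
  intro a b p
  induction p with
  | nil v => intro f hf; simp [Walk.reverse, Walk.edges] at hf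
  | cons e he p ih =>
      intro f hf
      rw [Walk.reverse] at hf
      rcases mem_edges_append _ _ _ hf with hf | hf
      · exact List.mem_cons_of_mem _ (ih f hf)
      · simp [Walk.edges] at hf
        subst hf
        exact List.mem_cons_self

lemma mem_support_reverse : ∀ {a b : V} (p : G.Walk a b) (x : V),
    x ∈ p.reverse.support → x ∈ p.support := by
  intro a b p
  induction p with
  | nil v => intro x hx; exact hx
  | cons e he p ih =>
      intro x hx
      rw [Walk.reverse] at hx
      rcases mem_support_append _ _ _ hx with hx | hx
      · exact List.mem_cons_of_mem _ (ih x hx)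
      · simp [Walk.support] at hx
        rcases hx with rfl | rfl
        · exact List.mem_cons_of_mem _ (start_mem_support p)
        · exact List.mem_cons_self

lemma edge_mem_support : ∀ {a b : V} (p : G.Walk a b) (f : G.Edge), f ∈ p.edges →
    ∀ z ∈ G.ends f, z ∈ p.support := by
  intro a b p
  induction p with
  | nil v => intro f hf; simp [Walk.edges] at hf
  | cons e he p ih =>
      intro f hf z hz
      rcases List.mem_cons.mp hf with rfl | hf
      · rw [he, Sym2.mem_iff] at hz
        rcases hz with rfl | rfl
        · exact List.mem_cons_self
        · exact List.mem_cons_of_mem _ (start_mem_support p)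
      · exact List.mem_cons_of_mem _ (ih f hf z hz)

lemma edges_nodup_of_support_nodup : ∀ {a b : V} (p : G.Walk a b),
    p.support.Nodup → p.edges.Nodup := by
  intro a b p
  induction p with
  | nil v => intro _; simp [Walk.edges]
  | cons e he p ih =>
      intro hnd
      rw [Walk.support, List.nodup_cons] at hnd
      refine List.nodup_cons.mpr ⟨fun hmem => ?_, ih hnd.2⟩
      exact hnd.1 (edge_mem_support p e hmem _ (by rw [he]; simp))

/-- Drop the initial part of a walk up to (the first occurrence of) `b`. -/
lemma dropFrom : ∀ {a t : V} (q : G.Walk a t) (b : V), b ∈ q.support →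
    ∃ r : G.Walk b t, r.support.Sublist q.support ∧ (∀ f ∈ r.edges, f ∈ q.edges) ∧
      r.edges.length ≤ q.edges.length ∧
      (b = a ∨ r.edges.length < q.edges.length) := by
  intro a t q
  induction q with
  | nil v =>
      intro b hb
      simp [Walk.support] at hb
      subst hb
      exact ⟨.nil _, List.Sublist.refl _, fun f hf => hf, le_refl _, Or.inl rfl⟩
  | cons e he p ih =>
      intro b hb
      rcases List.mem_cons.mp hb with rfl | hb
      · exact ⟨.cons e he p, List.Sublist.refl _, fun f hf => hf, le_refl _, Or.inl rfl⟩
      · obtain ⟨r, h1, h2, h3, _⟩ := ih b hb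
        refine ⟨r, h1.trans (List.sublist_cons_self _ _),
          fun f hf => List.mem_cons_of_mem _ (h2 f hf), ?_, Or.inr ?_⟩ <;>
          · simp only [Walk.edges, List.length_cons]; omega

/-- Every walk contains a path with the same endpoints. -/
lemma toPath : ∀ {a t : V} (q : G.Walk a t), ∃ r : G.Walk a t, r.support.Nodup ∧
    (∀ x ∈ r.support, x ∈ q.support) ∧ (∀ f ∈ r.edges, f ∈ q.edges) ∧
    r.edges.length ≤ q.edges.length := by
  intro a t q
  induction q with
  | nil v =>
      exact ⟨.nil v, by simp [Walk.support], fun x hx => hx, fun f hf => hf, le_refl _⟩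
  | @cons a' m t' e he p ih =>
      obtain ⟨r, hnd, hsup, hedg, hlen⟩ := ih
      by_cases hs : a' ∈ r.support
      · obtain ⟨r', h1, h2, h3, _⟩ := dropFrom r _ hs
        refine ⟨r', hnd.sublist h1,
          fun x hx => List.mem_cons_of_mem _ (hsup x (h1.subset hx)),
          fun f hf => List.mem_cons_of_mem _ (hedg f (h2 f hf)), ?_⟩
        simp only [Walk.edges, List.length_cons]; omega
      · refine ⟨.cons e he r, List.nodup_cons.mpr ⟨hs, hnd⟩, ?_, ?_, ?_⟩
        · intro x hx
          rcases List.mem_cons.mp hx with rfl | hx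
          · exact List.mem_cons_self
          · exact List.mem_cons_of_mem _ (hsup x hx)
        · intro f hf
          rcases List.mem_cons.mp hf with rfl | hf
          · exact List.mem_cons_self
          · exact List.mem_cons_of_mem _ (hedg f hf)
        · simp only [Walk.edges, List.length_cons]; omega

/-- An internal visit of a vertex uses two distinct incident edges. -/
lemma two_incident (u : V) : ∀ {a t : V} (q : G.Walk a t), u ∈ q.support → u ≠ a → u ≠ t →
    q.edges.Nodup →
    ∃ f₁ ∈ q.edges, ∃ f₂ ∈ q.edges, f₁ ≠ f₂ ∧ u ∈ G.ends f₁ ∧ u ∈ G.ends f₂ := by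
  intro a t q
  induction q with
  | nil v =>
      intro hmem hne _ _
      simp [Walk.support] at hmem
      exact absurd hmem hne
  | @cons a' m t' e he p ih =>
      intro hmem hne hnt hnd
      rw [Walk.edges, List.nodup_cons] at hnd
      by_cases hum : u = m
      · subst hum
        cases p with
        | nil v => exact absurd rfl hnt
        | @cons _ m₂ _ e₂ he₂ p₂ =>
            refine ⟨e, List.mem_cons_self, e₂,
              List.mem_cons_of_mem _ (List.mem_cons_self), ?_, ?_, ?_⟩
            · rintro rfl
              exact hnd.1 (List.mem_cons_self)
            · rw [he]; simp
            · rw [he₂]; simp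
      · have hur : u ∈ p.support := by
          rcases List.mem_cons.mp hmem with hh | hh
          · exact absurd hh hne
          · exact hh
        obtain ⟨f₁, h1, f₂, h2, h3, h4, h5⟩ := ih hur hum hnt hnd.2
        exact ⟨f₁, List.mem_cons_of_mem _ h1, f₂, List.mem_cons_of_mem _ h2, h3, h4, h5⟩

/-- Shortcut a walk along a chord `g` joining two of its vertices: either this
strictly shortens the walk, or the chord is parallel to an edge of the walk. -/
lemma shortcut (g : G.Edge) (a b : V) (hg : G.ends g = s(a, b)) (hab : a ≠ b) :
    ∀ {s t : V} (q : G.Walk s t), a ∈ q.support → b ∈ q.support →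
      ∃ q' : G.Walk s t, (∀ x ∈ q'.support, x ∈ q.support) ∧
        (∀ f ∈ q'.edges, f ∈ q.edges ∨ f = g) ∧
        (q'.edges.length < q.edges.length ∨ ∃ f ∈ q.edges, G.ends f = G.ends g) := by
  intro s t q
  induction q with
  | nil v =>
      intro ha hb
      simp [Walk.support] at ha hb
      exact absurd (ha.trans hb.symm) hab
  | @cons s' m t' f hf rest ih =>
      intro ha hb
      by_cases hbr : b ∈ rest.support
      · by_cases har : a ∈ rest.support
        · obtain ⟨q'', h1, h2, h3⟩ := ih har hbr
          refine ⟨.cons f hf q'', ?_, ?_, ?_⟩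
          · intro x hx
            rcases List.mem_cons.mp hx with rfl | hx
            · exact List.mem_cons_self
            · exact List.mem_cons_of_mem _ (h1 x hx)
          · intro f' hf'
            rcases List.mem_cons.mp hf' with rfl | hf'
            · exact Or.inl (List.mem_cons_self)
            · rcases h2 f' hf' with hh | hh
              exacts [Or.inl (List.mem_cons_of_mem _ hh), Or.inr hh]
          · rcases h3 with hh | ⟨f', hf', hfe⟩
            · left; simp only [Walk.edges, List.length_cons]; omega
            · exact Or.inr ⟨f', List.mem_cons_of_mem _ hf', hfe⟩
        · have has : a = s' := by
            rcases List.mem_cons.mp ha with hh | hh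
            · exact hh
            · exact absurd hh har
          subst has
          obtain ⟨r, hrsub, hre, _, hrlen⟩ := dropFrom rest b hbr
          refine ⟨.cons g hg r, ?_, ?_, ?_⟩
          · intro x hx
            rcases List.mem_cons.mp hx with rfl | hx
            · exact List.mem_cons_self
            · exact List.mem_cons_of_mem _ (hrsub.subset hx)
          · intro f' hf'
            rcases List.mem_cons.mp hf' with rfl | hf'
            · exact Or.inr rfl
            · exact Or.inl (List.mem_cons_of_mem _ (hre f' hf'))
          · rcases hrlen with rfl | hlt
            · exact Or.inr ⟨f, List.mem_cons_self, by rw [hf, hg]⟩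
            · left; simp only [Walk.edges, List.length_cons]; omega
      · have hbs : b = s' := by
          rcases List.mem_cons.mp hb with hh | hh
          · exact hh
          · exact absurd hh hbr
        subst hbs
        have har : a ∈ rest.support := by
          rcases List.mem_cons.mp ha with hh | hh
          · exact absurd hh hab
          · exact hh
        obtain ⟨r, hrsub, hre, _, hrlen⟩ := dropFrom rest a har
        refine ⟨.cons g (by rw [hg, Sym2.eq_swap]) r, ?_, ?_, ?_⟩
        · intro x hx
          rcases List.mem_cons.mp hx with rfl | hx
          · exact List.mem_cons_self
          · exact List.mem_cons_of_mem _ (hrsub.subset hx)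
        · intro f' hf'
          rcases List.mem_cons.mp hf' with rfl | hf'
          · exact Or.inr rfl
          · exact Or.inl (List.mem_cons_of_mem _ (hre f' hf'))
        · rcases hrlen with rfl | hlt
          · refine Or.inr ⟨f, List.mem_cons_self, ?_⟩
            rw [hf, hg]
            exact Sym2.eq_swap
          · left; simp only [Walk.edges, List.length_cons]; omega

end Walk

end Helpers

/-- **Chordless cycles through an edge avoiding a vertex (quasi 3-regular
case).**  Let `G` be a quasi 3-regular, 3-edge-connected multigraph with
high-degree vertex `h`, let `e = (v, w)` be an edge with `v = h` or `w = h`,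
and let `u` be a vertex distinct from `v` and `w`.  Suppose `G` has at most
one double edge and, if it has one, `u` is an endpoint of it.  Then `G`
contains a chordless cycle through the edge `e` avoiding the vertex `u`. -/
theorem exists_chordless_cycle_quasiRegular {V : Type} (G : Multigraph V)
    (h3 : G.EdgeConnected 3) (h : V) (hq : ∀ x : V, x ≠ h → G.degree x = 3)
    {v w : V} (e : G.Edge) (he : G.ends e = s(v, w)) (hvw : v = h ∨ w = h)
    (u : V) (huv : u ≠ v) (huw : u ≠ w)
    (hdbl : G.doubleEdges.Subsingleton)
    (hu : ∀ z ∈ G.doubleEdges, ∀ f ∈ z, u ∈ G.ends f) :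
    ∃ (x : V) (p : G.Walk x x), IsCycle p ∧ IsChordless p ∧
      e ∈ p.edges ∧ u ∉ p.support := by
  classical
  obtain ⟨-, hEDP⟩ := h3
  have hvwne : v ≠ w := by
    have hl := G.loopless e
    rw [he, Sym2.mk_isDiag_iff] at hl
    exact hl
  have huh : u ≠ h := by
    rcases hvw with hh | hh
    · rw [← hh]; exact huv
    · rw [← hh]; exact huw
  have hdegu : ({f : G.Edge | u ∈ G.ends f}).ncard = 3 := hq u huh
  -- Step 1: there is a walk from `v` to `w` avoiding both `e` and `u`.
  obtain ⟨P, hnd, hdisj⟩ := hEDP v w hvwne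
  have key : ∃ i : Fin 3, e ∉ (P i).edges ∧ u ∉ (P i).support := by
    by_contra hcon
    push_neg at hcon
    obtain ⟨i, j, hij, hui, huj⟩ :
        ∃ i j : Fin 3, i ≠ j ∧ u ∈ (P i).support ∧ u ∈ (P j).support := by
      by_cases h0 : e ∈ (P 0).edges
      · exact ⟨1, 2, by decide, hcon 1 (hdisj 0 1 (by decide) e h0),
          hcon 2 (hdisj 0 2 (by decide) e h0)⟩
      · by_cases h1 : e ∈ (P 1).edges
        · exact ⟨0, 2, by decide, hcon 0 h0, hcon 2 (hdisj 1 2 (by decide) e h1)⟩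
        · exact ⟨0, 1, by decide, hcon 0 h0, hcon 1 h1⟩
    obtain ⟨f₁, hf₁, f₂, hf₂, h12, hu1, hu2⟩ := Walk.two_incident u (P i) hui huv huw (hnd i)
    obtain ⟨f₃, hf₃, f₄, hf₄, h34, hu3, hu4⟩ := Walk.two_incident u (P j) huj huv huw (hnd j)
    have hdj : ∀ f ∈ (P i).edges, f ∉ (P j).edges := hdisj i j hij
    have h13 : f₁ ≠ f₃ := fun hh => hdj f₁ hf₁ (hh ▸ hf₃)
    have h14 : f₁ ≠ f₄ := fun hh => hdj f₁ hf₁ (hh ▸ hf₄)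
    have h23 : f₂ ≠ f₃ := fun hh => hdj f₂ hf₂ (hh ▸ hf₃)
    have h24 : f₂ ≠ f₄ := fun hh => hdj f₂ hf₂ (hh ▸ hf₄)
    have hss : ({f₁, f₂, f₃, f₄} : Set G.Edge) ⊆ {f | u ∈ G.ends f} := by
      intro x hx
      simp only [Set.mem_insert_iff, Set.mem_singleton_iff] at hx
      rcases hx with rfl | rfl | rfl | rfl <;> assumption
    have h4 : ({f₁, f₂, f₃, f₄} : Set G.Edge).ncard = 4 := by
      rw [Set.ncard_insert_of_notMem (by simp [h12, h13, h14]),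
        Set.ncard_insert_of_notMem (by simp [h23, h24]), Set.ncard_pair h34]
    have hle : 4 ≤ ({f : G.Edge | u ∈ G.ends f}).ncard := by
      rw [← h4]
      exact Set.ncard_le_ncard hss (Set.toFinite _)
    omega
  obtain ⟨i, hei, hui⟩ := key
  -- Step 2: take a shortest walk from `w` to `v` avoiding `e` and `u`.
  have hGood : ∃ n, ∃ q : G.Walk w v,
      (e ∉ q.edges ∧ ∀ x ∈ q.support, x ≠ u) ∧ q.edges.length = n :=
    ⟨_, (P i).reverse,
      ⟨fun hh => hei (Walk.mem_edges_reverse _ _ hh),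
       fun x hx hxu => hui (hxu ▸ Walk.mem_support_reverse _ _ hx)⟩, rfl⟩
  obtain ⟨q1, ⟨hq1e, hq1u⟩, hq1len⟩ := Nat.find_spec hGood
  obtain ⟨q0, hnodup, hsup, hedg, hlen⟩ := Walk.toPath q1
  have hq0e : e ∉ q0.edges := fun hh => hq1e (hedg _ hh)
  have hq0u : ∀ x ∈ q0.support, x ≠ u := fun x hx => hq1u x (hsup x hx)
  have hq0len : q0.edges.length ≤ Nat.find hGood := by rw [← hq1len]; exact hlen
  refine ⟨v, Walk.cons e he q0, ⟨?_, ?_, ?_⟩, ?_, List.mem_cons_self, ?_⟩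
  · exact List.nodup_cons.mpr ⟨hq0e, Walk.edges_nodup_of_support_nodup q0 hnodup⟩
  · simpa only [Walk.support, List.tail_cons] using hnodup
  · have hne : q0.edges ≠ [] := fun hh => hvwne (Walk.eq_of_edges_eq_nil q0 hh).symm
    have := List.length_pos_iff.mpr hne
    simp only [Walk.edges, List.length_cons]
    omega
  · intro g hg x y hgxy hx hy
    have hxy : x ≠ y := by
      have hl := G.loopless g
      rw [hgxy, Sym2.mk_isDiag_iff] at hl
      exact hl
    have hge : g ≠ e := fun hh => hg (hh ▸ List.mem_cons_self)
    have hxs : x ∈ q0.support := by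
      rcases List.mem_cons.mp hx with rfl | hh
      · exact Walk.end_mem_support q0
      · exact hh
    have hys : y ∈ q0.support := by
      rcases List.mem_cons.mp hy with rfl | hh
      · exact Walk.end_mem_support q0
      · exact hh
    have hgq : g ∉ q0.edges := fun hh => hg (List.mem_cons_of_mem _ hh)
    obtain ⟨q', hs', he', hor⟩ := Walk.shortcut g x y hgxy hxy q0 hxs hys
    rcases hor with hlt | ⟨f, hf, hfg⟩
    · have hq'e : e ∉ q'.edges := by
        intro hh
        rcases he' e hh with hh' | hh'
        · exact hq0e hh'
        · exact hge hh'.symm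
      have hq'u : ∀ z ∈ q'.support, z ≠ u := fun z hz => hq0u z (hs' z hz)
      exact Nat.find_min hGood (by omega) ⟨q', ⟨hq'e, hq'u⟩, rfl⟩
    · have hfg' : f ≠ g := fun hh => hgq (hh ▸ hf)
      have hdd : s(f, g) ∈ G.doubleEdges := ⟨f, g, rfl, hfg', hfg⟩
      have hu' : u ∈ G.ends f := hu _ hdd f (by simp)
      rw [hfg, hgxy, Sym2.mem_iff] at hu'
      rcases hu' with rfl | rfl
      · exact hq0u _ hxs rfl
      · exact hq0u _ hys rfl
  · intro hmem
    rcases List.mem_cons.mp hmem with hh | hh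
    · exact huv hh
    · exact hq0u u hh rfl

end Multigraph
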